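/- Let A be SPD and A_ℓ = A + Σ_{k=1}^ℓ E_k with each E_k symmetric satisfying E_k = P_k E_k P_k for orthogonal projectors P_k. If Σ_k ‖E_k‖₂ ‖P_k A^{-1} P_k‖₂ ≤ μ < 1, then A_ℓ is SPD and the condition number of A_ℓ^{-1/2} A A_ℓ^{-1/2} is at most (1+μ)/(1−μ). -/

import Mathlib

open Matrix
open scoped Matrix.Norms.L2Operator

section Aux

variable {n : ℕ}

private lemma dot_sym' (M : Matrix (Fin n) (Fin n) ℝ) (hM : Mᵀ = M) (u w : Fin n → ℝ) :
    u ⬝ᵥ (M *ᵥ w) = (M *ᵥ u) ⬝ᵥ w := by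
  rw [dotProduct_mulVec, ← mulVec_transpose, hM]

private lemma dot_self_norm' (v : Fin n → ℝ) :
    v ⬝ᵥ v = ‖((EuclideanSpace.equiv (Fin n) ℝ).symm v : EuclideanSpace ℝ (Fin n))‖
      * ‖((EuclideanSpace.equiv (Fin n) ℝ).symm v : EuclideanSpace ℝ (Fin n))‖ := by
  rw [← real_inner_self_eq_norm_mul_norm]
  simp [PiLp.inner_apply, dotProduct, RCLike.inner_apply]
  rw [EuclideanSpace.real_norm_sq_eq]; simp [sq]

private lemma transpose_real' (M : Matrix (Fin n) (Fin n) ℝ) : Mᴴ = Mᵀ := by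
  ext i j; simp [conjTranspose_apply]

private lemma quad_abs_le' (M : Matrix (Fin n) (Fin n) ℝ) (x : Fin n → ℝ) :
    |x ⬝ᵥ (M *ᵥ x)| ≤ ‖M‖ * (x ⬝ᵥ x) := by
  set ex : EuclideanSpace ℝ (Fin n) := (EuclideanSpace.equiv (Fin n) ℝ).symm x with hex
  set ey : EuclideanSpace ℝ (Fin n) := (EuclideanSpace.equiv (Fin n) ℝ).symm (M *ᵥ x) with hey
  have h1 : x ⬝ᵥ (M *ᵥ x) = inner ℝ ex ey := by
    simp [PiLp.inner_apply, dotProduct, hex, hey, RCLike.inner_apply]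
    exact Finset.sum_congr rfl fun i _ => mul_comm _ _
  have h2 : |inner ℝ ex ey| ≤ ‖ex‖ * ‖ey‖ := abs_real_inner_le_norm ex ey
  have h3 : ‖ey‖ ≤ ‖M‖ * ‖ex‖ := M.l2_opNorm_mulVec ex
  have h4 : ‖ex‖ * ‖ex‖ = x ⬝ᵥ x := by
    rw [← real_inner_self_eq_norm_mul_norm]
    simp [PiLp.inner_apply, dotProduct, hex, RCLike.inner_apply]
    rw [EuclideanSpace.real_norm_sq_eq]; simp [sq]
  calc |x ⬝ᵥ (M *ᵥ x)| = |inner ℝ ex ey| := by rw [h1]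
    _ ≤ ‖ex‖ * ‖ey‖ := h2
    _ ≤ ‖ex‖ * (‖M‖ * ‖ex‖) := by nlinarith [norm_nonneg ey, norm_nonneg ex]
    _ = ‖M‖ * (x ⬝ᵥ x) := by rw [← h4]; ring

private lemma proj_idem_quad' (P : Matrix (Fin n) (Fin n) ℝ) (hPh : Pᵀ = P)
    (hPi : P * P = P) (u : Fin n → ℝ) :
    u ⬝ᵥ (P *ᵥ u) = (P *ᵥ u) ⬝ᵥ (P *ᵥ u) := by
  conv_lhs => rw [← hPi, ← mulVec_mulVec, dot_sym' P hPh]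

open scoped MatrixOrder in
private lemma proj_quad_le' {A : Matrix (Fin n) (Fin n) ℝ} (hA : A.PosDef)
    (P : Matrix (Fin n) (Fin n) ℝ) (hPs : P.IsSymm) (hPi : P * P = P) (x : Fin n → ℝ) :
    x ⬝ᵥ (P *ᵥ x) ≤ ‖P * A⁻¹ * P‖ * (x ⬝ᵥ (A *ᵥ x)) := by
  classical
  set Q := CFC.sqrt A with hQdef
  have hQps : Q.PosSemidef := Matrix.nonneg_iff_posSemidef.1 (CFC.sqrt_nonneg A)
  have hQ2 : Q * Q = A := CFC.sqrt_mul_sqrt_self A (Matrix.nonneg_iff_posSemidef.2 hA.posSemidef)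
  have hdetA : IsUnit A.det := isUnit_iff_ne_zero.2 (ne_of_gt hA.det_pos)
  have hdetQ : IsUnit Q.det := by
    have h : Q.det * Q.det = A.det := by rw [← det_mul, hQ2]
    exact isUnit_of_mul_isUnit_left (h ▸ hdetA)
  have hQh : Qᵀ = Q := by rw [← transpose_real']; exact hQps.isHermitian
  have hPh : Pᵀ = P := hPs
  have hRh : Q⁻¹ᵀ = Q⁻¹ := by rw [transpose_nonsing_inv, hQh]
  have hRR : Q⁻¹ * Q⁻¹ = A⁻¹ := by rw [← Matrix.mul_inv_rev, hQ2]
  obtain ⟨y, hxy⟩ : ∃ y, x = Q⁻¹ *ᵥ y :=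
    ⟨Q *ᵥ x, by rw [mulVec_mulVec, Matrix.nonsing_inv_mul Q hdetQ, one_mulVec]⟩
  set C := P * Q⁻¹ with hC
  have hCh : Cᴴ = Q⁻¹ * P := by rw [transpose_real', hC, transpose_mul, hRh, hPh]
  have key : x ⬝ᵥ (P *ᵥ x) = (C *ᵥ y) ⬝ᵥ (C *ᵥ y) := by
    rw [proj_idem_quad' P hPh hPi, hxy, mulVec_mulVec, hC]
  have keyA : x ⬝ᵥ (A *ᵥ x) = y ⬝ᵥ y := by
    have h1 : Q⁻¹ * (A * Q⁻¹) = 1 := by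
      rw [← hQ2, Matrix.mul_assoc Q Q, Matrix.mul_nonsing_inv Q hdetQ, Matrix.mul_one,
        Matrix.nonsing_inv_mul Q hdetQ]
    rw [hxy, mulVec_mulVec, ← dot_sym' Q⁻¹ hRh, mulVec_mulVec, h1, one_mulVec]
  have hCnorm : ‖C‖ * ‖C‖ = ‖P * A⁻¹ * P‖ := by
    have h1 : ‖Cᴴᴴ * Cᴴ‖ = ‖Cᴴ‖ * ‖Cᴴ‖ := l2_opNorm_conjTranspose_mul_self Cᴴ
    rw [conjTranspose_conjTranspose, l2_opNorm_conjTranspose] at h1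
    rw [← h1, hCh, hC]
    congr 1
    rw [Matrix.mul_assoc, ← Matrix.mul_assoc Q⁻¹, hRR, Matrix.mul_assoc]
  have hnorm : (C *ᵥ y) ⬝ᵥ (C *ᵥ y) ≤ (‖C‖ * ‖C‖) * (y ⬝ᵥ y) := by
    rw [dot_self_norm' (C *ᵥ y), dot_self_norm' y]
    have h3 : ‖((EuclideanSpace.equiv (Fin n) ℝ).symm (C *ᵥ y) : EuclideanSpace ℝ (Fin n))‖
        ≤ ‖C‖ * ‖((EuclideanSpace.equiv (Fin n) ℝ).symm y : EuclideanSpace ℝ (Fin n))‖ :=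
      C.l2_opNorm_mulVec _
    nlinarith [norm_nonneg ((EuclideanSpace.equiv (Fin n) ℝ).symm (C *ᵥ y)),
      norm_nonneg ((EuclideanSpace.equiv (Fin n) ℝ).symm y), norm_nonneg C]
  rw [key, keyA, ← hCnorm]
  exact hnorm

end Aux

/-- The spectral norm (ℓ²-operator norm) of a real square matrix. -/
noncomputable def spectralNormL2 (n : ℕ) (M : Matrix (Fin n) (Fin n) ℝ) : ℝ :=
  ‖LinearMap.toContinuousLinearMap (Matrix.toEuclideanLin M)‖

private lemma spectralNormL2_eq_norm {n : ℕ} (M : Matrix (Fin n) (Fin n) ℝ) :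
    spectralNormL2 n M = ‖M‖ := rfl

/-- Let `A` be SPD and `A_ℓ = A + ∑_{k=1}^ℓ E_k` with each `E_k` symmetric and
`E_k = P_k E_k P_k` for orthogonal projectors `P_k`.  If
`∑_k ‖E_k‖₂ ‖P_k A⁻¹ P_k‖₂ ≤ μ < 1`, then `A_ℓ` is SPD and the condition number of
`A_ℓ^{-1/2} A A_ℓ^{-1/2}` is at most `(1+μ)/(1−μ)`: for any SPD `S` with
`S * S = A_ℓ⁻¹` (so `S = A_ℓ^{-1/2}`), any two eigenvalues of the symmetric matrix
`S * A * S` have ratio at most `(1+μ)/(1−μ)`. -/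
theorem preconditioned_condition_number_bound (n ℓ : ℕ) (μ : ℝ)
    (A : Matrix (Fin n) (Fin n) ℝ) (E P : Fin ℓ → Matrix (Fin n) (Fin n) ℝ)
    (hA : A.PosDef)
    (hEsymm : ∀ k, (E k).IsSymm)
    (hPsymm : ∀ k, (P k).IsSymm)
    (hPidem : ∀ k, P k * P k = P k)
    (hEP : ∀ k, E k = P k * E k * P k)
    (hsum : ∑ k, spectralNormL2 n (E k) * spectralNormL2 n (P k * A⁻¹ * P k) ≤ μ)
    (hμ : μ < 1) :
    (A + ∑ k, E k).PosDef ∧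
    ∀ S : Matrix (Fin n) (Fin n) ℝ, S.PosDef → S * S = (A + ∑ k, E k)⁻¹ →
      ∀ (h : (S * A * S).IsHermitian) (i j : Fin n),
        h.eigenvalues i ≤ ((1 + μ) / (1 - μ)) * h.eigenvalues j := by
  classical
  have hμ0 : 0 ≤ μ := by
    refine le_trans (Finset.sum_nonneg fun k _ => ?_) hsum
    rw [spectralNormL2_eq_norm, spectralNormL2_eq_norm]
    exact mul_nonneg (norm_nonneg _) (norm_nonneg _)
  -- star is trivial on real vectors
  have hstar : ∀ x : Fin n → ℝ, star x = x := fun x => funext fun i => rfl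
  -- expand sum mulVec
  have hsumv : ∀ x : Fin n → ℝ, (∑ k, E k) *ᵥ x = ∑ k, E k *ᵥ x := by
    intro x; ext i
    simp only [mulVec, dotProduct, Finset.sum_apply, Matrix.sum_apply, Finset.sum_mul]
    rw [Finset.sum_comm]
  -- the key quadratic bound
  have hquad : ∀ x : Fin n → ℝ, |x ⬝ᵥ ((∑ k, E k) *ᵥ x)| ≤ μ * (x ⬝ᵥ (A *ᵥ x)) := by
    intro x
    have hAx : 0 ≤ x ⬝ᵥ (A *ᵥ x) := by
      have := hA.posSemidef.dotProduct_mulVec_nonneg x; rwa [hstar] at this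
    have hterm : ∀ k, |x ⬝ᵥ (E k *ᵥ x)| ≤
        (spectralNormL2 n (E k) * spectralNormL2 n (P k * A⁻¹ * P k)) * (x ⬝ᵥ (A *ᵥ x)) := by
      intro k
      have hPh : (P k)ᵀ = P k := hPsymm k
      have e1 : x ⬝ᵥ (E k *ᵥ x) = (P k *ᵥ x) ⬝ᵥ (E k *ᵥ (P k *ᵥ x)) := by
        conv_lhs => rw [hEP k]
        rw [← mulVec_mulVec, ← mulVec_mulVec, dot_sym' (P k) hPh]
      have e2 : |(P k *ᵥ x) ⬝ᵥ (E k *ᵥ (P k *ᵥ x))| ≤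
          ‖E k‖ * ((P k *ᵥ x) ⬝ᵥ (P k *ᵥ x)) := quad_abs_le' (E k) (P k *ᵥ x)
      have e3 : (P k *ᵥ x) ⬝ᵥ (P k *ᵥ x) = x ⬝ᵥ (P k *ᵥ x) :=
        (proj_idem_quad' (P k) hPh (hPidem k) x).symm
      have e4 : x ⬝ᵥ (P k *ᵥ x) ≤ ‖P k * A⁻¹ * P k‖ * (x ⬝ᵥ (A *ᵥ x)) :=
        proj_quad_le' hA (P k) (hPsymm k) (hPidem k) x
      rw [spectralNormL2_eq_norm, spectralNormL2_eq_norm, e1]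
      calc |(P k *ᵥ x) ⬝ᵥ (E k *ᵥ (P k *ᵥ x))| ≤ ‖E k‖ * (x ⬝ᵥ (P k *ᵥ x)) := by
            rw [← e3]; exact e2
        _ ≤ ‖E k‖ * (‖P k * A⁻¹ * P k‖ * (x ⬝ᵥ (A *ᵥ x))) :=
            mul_le_mul_of_nonneg_left e4 (norm_nonneg _)
        _ = ‖E k‖ * ‖P k * A⁻¹ * P k‖ * (x ⬝ᵥ (A *ᵥ x)) := by ring
    have hds : x ⬝ᵥ (∑ k, E k *ᵥ x) = ∑ k, x ⬝ᵥ (E k *ᵥ x) := by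
      simp only [dotProduct, Finset.sum_apply, Finset.mul_sum]
      rw [Finset.sum_comm]
    calc |x ⬝ᵥ ((∑ k, E k) *ᵥ x)| = |∑ k, x ⬝ᵥ (E k *ᵥ x)| := by
          rw [hsumv, hds]
      _ ≤ ∑ k, |x ⬝ᵥ (E k *ᵥ x)| := Finset.abs_sum_le_sum_abs _ _
      _ ≤ ∑ k, (spectralNormL2 n (E k) * spectralNormL2 n (P k * A⁻¹ * P k)) * (x ⬝ᵥ (A *ᵥ x)) :=
          Finset.sum_le_sum fun k _ => hterm k
      _ = (∑ k, spectralNormL2 n (E k) * spectralNormL2 n (P k * A⁻¹ * P k)) * (x ⬝ᵥ (A *ᵥ x)) := by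
          rw [Finset.sum_mul]
      _ ≤ μ * (x ⬝ᵥ (A *ᵥ x)) := mul_le_mul_of_nonneg_right hsum hAx
  -- expansion of the perturbed quadratic form
  have hexp : ∀ x : Fin n → ℝ,
      x ⬝ᵥ ((A + ∑ k, E k) *ᵥ x) = x ⬝ᵥ (A *ᵥ x) + x ⬝ᵥ ((∑ k, E k) *ᵥ x) := by
    intro x; rw [add_mulVec, dotProduct_add]
  -- Positive definiteness of the perturbed matrix
  have hEh : ∀ k, (E k).IsHermitian := by
    intro k
    show (E k)ᴴ = E k
    rw [transpose_real']; exact hEsymm k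
  have hAl : (A + ∑ k, E k).PosDef := by
    refine Matrix.PosDef.of_dotProduct_mulVec_pos ?_ ?_
    · exact hA.1.add (by
        show (∑ k, E k)ᴴ = ∑ k, E k
        rw [conjTranspose_sum]
        exact Finset.sum_congr rfl fun k _ => hEh k)
    · intro x hx
      rw [hstar, hexp]
      have h1 : 0 < x ⬝ᵥ (A *ᵥ x) := by
        have := hA.dotProduct_mulVec_pos hx; rwa [hstar] at this
      have h2 := hquad x
      have h3 := abs_le.1 h2
      nlinarith [h3.1]
  refine ⟨hAl, ?_⟩
  intro S hS hS2 h i j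
  set AL := A + ∑ k, E k with hALdef
  have hALu : IsUnit AL := hAl.isUnit
  have hALdet : IsUnit AL.det := (Matrix.isUnit_iff_isUnit_det AL).1 hALu
  have hSu : IsUnit (S * AL * S) := (hS.isUnit.mul hALu).mul hS.isUnit
  have key1 : S * AL * S = 1 := by
    have hT : (S * AL * S) * (S * AL * S) = (S * AL * S) * 1 := by
      rw [Matrix.mul_one]
      have e : (S * AL * S) * (S * AL * S) = S * (AL * ((S * S) * (AL * S))) := by
        simp only [Matrix.mul_assoc]
      rw [e, hS2, Matrix.mul_nonsing_inv_cancel_left AL (AL * S) hALdet, Matrix.mul_assoc]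
    exact hSu.mul_left_cancel hT
  have hSh : Sᵀ = S := by rw [← transpose_real']; exact hS.1
  -- per-eigenvalue bounds
  have bound : ∀ m : Fin n, (1 - μ) * h.eigenvalues m ≤ 1 ∧ 1 ≤ (1 + μ) * h.eigenvalues m := by
    intro m
    set v : Fin n → ℝ := ⇑(h.eigenvectorBasis m) with hv
    have hvv : v ⬝ᵥ v = 1 := by
      have h1 : ‖((EuclideanSpace.equiv (Fin n) ℝ).symm v : EuclideanSpace ℝ (Fin n))‖ = 1 :=
        h.eigenvectorBasis.orthonormal.1 m
      rw [dot_self_norm' v, h1, mul_one]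
    have hmv : (S * A * S) *ᵥ v = h.eigenvalues m • v := h.mulVec_eigenvectorBasis m
    set x : Fin n → ℝ := S *ᵥ v with hx
    have hlam : h.eigenvalues m = x ⬝ᵥ (A *ᵥ x) := by
      have e1 : v ⬝ᵥ ((S * A * S) *ᵥ v) = h.eigenvalues m := by
        rw [hmv, dotProduct_smul, smul_eq_mul, hvv, mul_one]
      have e2 : v ⬝ᵥ ((S * A * S) *ᵥ v) = x ⬝ᵥ (A *ᵥ x) := by
        rw [← mulVec_mulVec, ← mulVec_mulVec, dot_sym' S hSh]
      rw [← e1, e2]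
    have hone : x ⬝ᵥ (AL *ᵥ x) = 1 := by
      have e2 : x ⬝ᵥ (AL *ᵥ x) = v ⬝ᵥ ((S * AL * S) *ᵥ v) := by
        rw [hx, ← dot_sym' S hSh, mulVec_mulVec, mulVec_mulVec]
      rw [e2, key1, one_mulVec, hvv]
    have hq := hquad x
    have hqe := hexp x
    rw [hone] at hqe
    have h3 := abs_le.1 hq
    constructor
    · nlinarith [h3.1, h3.2]
    · nlinarith [h3.1, h3.2]
  have hbi := (bound i).1
  have hbj := (bound j).2
  have h1μ : 0 < 1 - μ := by linarith
  rw [div_mul_eq_mul_div, le_div_iff₀ h1μ]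
  nlinarith
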